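/- arXiv:2002.03879 — 4 statements merged into one kernel-verified Lean document; each statement's English description precedes it below -/
import Mathlib

section
/- For real x > 0 and real y ≠ 0, (Γ(x)/|Γ(x+iy)|)^2 ≤ (1 + y²/x²) · sinh(πy)/(πy). -/
open Filter Finset Topology

theorem gamma_ratio_sq_le (x y : ℝ) (hx : 0 < x) (hy : y ≠ 0) :
    (Real.Gamma x / ‖Complex.Gamma (x + y * Complex.I)‖) ^ 2 ≤
      (1 + y ^ 2 / x ^ 2) * (Real.sinh (Real.pi * y) / (Real.pi * y)) := by
  set z : ℂ := x + y * Complex.I with hz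
  set P : ℕ → ℝ := fun n => ∏ j ∈ Finset.range n, (1 + y ^ 2 / (x + j) ^ 2) with hP
  set Q : ℕ → ℝ := fun n => ∏ j ∈ Finset.range n, (1 + y ^ 2 / ((j : ℝ) + 1) ^ 2) with hQ
  have hπy : Real.pi * y ≠ 0 := mul_ne_zero Real.pi_ne_zero hy
  have hc : ((Real.pi * y : ℝ) : ℂ) * Complex.I ≠ 0 :=
    mul_ne_zero (Complex.ofReal_ne_zero.mpr hπy) Complex.I_ne_zero
  -- sinh product formula
  have hsin := Complex.tendsto_euler_sin_prod ((y : ℂ) * Complex.I)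
  have hterm : ∀ j : ℕ, (1 : ℂ) - ((y : ℂ) * Complex.I) ^ 2 / ((j : ℂ) + 1) ^ 2
      = ((1 + y ^ 2 / ((j : ℝ) + 1) ^ 2 : ℝ) : ℂ) := by
    intro j
    rw [mul_pow, Complex.I_sq]
    push_cast
    ring
  have hsin' : Filter.Tendsto (fun n : ℕ => ((Real.pi * y : ℝ) : ℂ) * Complex.I * (Q n : ℂ))
      atTop (𝓝 (((Real.sinh (Real.pi * y) : ℝ) : ℂ) * Complex.I)) := by
    have e1 : ∀ n : ℕ, (Real.pi : ℂ) * ((y : ℂ) * Complex.I) *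
        ∏ j ∈ Finset.range n, ((1 : ℂ) - ((y : ℂ) * Complex.I) ^ 2 / ((j : ℂ) + 1) ^ 2)
        = ((Real.pi * y : ℝ) : ℂ) * Complex.I * (Q n : ℂ) := by
      intro n
      rw [Finset.prod_congr rfl fun j _ => hterm j, ← Complex.ofReal_prod,
        Complex.ofReal_mul]
      ring
    have e2 : Complex.sin ((Real.pi : ℂ) * ((y : ℂ) * Complex.I))
        = ((Real.sinh (Real.pi * y) : ℝ) : ℂ) * Complex.I := by
      rw [show (Real.pi : ℂ) * ((y : ℂ) * Complex.I) = ((Real.pi * y : ℝ) : ℂ) * Complex.I by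
        push_cast; ring, Complex.sin_mul_I, Complex.ofReal_sinh]
    rw [← e2]
    exact hsin.congr e1
  have hQlim : Filter.Tendsto Q atTop (𝓝 (Real.sinh (Real.pi * y) / (Real.pi * y))) := by
    rw [← Filter.tendsto_ofReal_iff]
    have e2' : (((Real.sinh (Real.pi * y)) : ℝ) : ℂ) * Complex.I
        = (((Real.pi * y : ℝ) : ℂ) * Complex.I) *
          ((Real.sinh (Real.pi * y) / (Real.pi * y) : ℝ) : ℂ) := by
      rw [Complex.ofReal_div, div_eq_mul_inv,
        show (((Real.pi * y : ℝ) : ℂ) * Complex.I) *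
            (((Real.sinh (Real.pi * y) : ℝ) : ℂ) * (((Real.pi * y : ℝ) : ℂ))⁻¹)
          = ((Real.sinh (Real.pi * y) : ℝ) : ℂ) * Complex.I *
            (((Real.pi * y : ℝ) : ℂ) * (((Real.pi * y : ℝ) : ℂ))⁻¹) from by ring,
        mul_inv_cancel₀ (Complex.ofReal_ne_zero.mpr hπy), mul_one]
    rw [e2'] at hsin'
    have h := hsin'.const_mul ((((Real.pi * y : ℝ)) : ℂ) * Complex.I)⁻¹
    simp_rw [inv_mul_cancel_left₀ hc] at h
    exact h
  -- Gamma product formula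
  have hxj : ∀ j : ℕ, (0 : ℝ) < x + j := fun j => by positivity
  have hΓz : Complex.Gamma z ≠ 0 := by
    apply Complex.Gamma_ne_zero_of_re_pos
    simp [hz, hx]
  have hΓzabs : ‖Complex.Gamma z‖ ≠ 0 := by simpa using hΓz
  have h1 := Complex.GammaSeq_tendsto_Gamma (x : ℂ)
  have h2 := Complex.GammaSeq_tendsto_Gamma z
  have habs1 : Filter.Tendsto (fun n => ‖Complex.GammaSeq (x : ℂ) n‖) atTop
      (𝓝 ‖Complex.Gamma (x : ℂ)‖) := (continuous_norm.tendsto _).comp h1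
  have habs2 : Filter.Tendsto (fun n => ‖Complex.GammaSeq z n‖) atTop
      (𝓝 ‖Complex.Gamma z‖) := (continuous_norm.tendsto _).comp h2
  have hdiv := (habs1.div habs2 hΓzabs).pow 2
  have key : ∀ n : ℕ, 1 ≤ n →
      (‖Complex.GammaSeq (x : ℂ) n‖ / ‖Complex.GammaSeq z n‖) ^ 2
        = P (n + 1) := by
    intro n hn
    have hn0 : (0 : ℝ) < n := by exact_mod_cast hn
    have hax : ∀ j ∈ Finset.range (n + 1), ‖(x : ℂ) + (j : ℂ)‖ = x + j := by
      intro j _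
      rw [show (x : ℂ) + (j : ℂ) = ((x + j : ℝ) : ℂ) by push_cast; ring, Complex.norm_real, Real.norm_eq_abs,
        abs_of_pos (hxj j)]
    have haz : ∀ j : ℕ, ‖z + (j : ℂ)‖ ^ 2 = (x + j) ^ 2 + y ^ 2 := by
      intro j
      rw [Complex.sq_norm, show z + (j : ℂ) = ((x + j : ℝ) : ℂ) + (y : ℝ) * Complex.I by
        rw [hz]; push_cast; ring, Complex.normSq_add_mul_I]
    have hB : (0 : ℝ) < ∏ j ∈ Finset.range (n + 1), (x + (j : ℝ)) :=
      Finset.prod_pos fun j _ => hxj j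
    have hCz : ∀ j : ℕ, (0 : ℝ) < ‖z + (j : ℂ)‖ := by
      intro j
      apply norm_pos_iff.mpr
      intro h
      have h' : (x + j : ℝ) = 0 := by
        have := congrArg Complex.re h
        simpa [hz] using this
      exact absurd h' (ne_of_gt (hxj j))
    have hC : (0 : ℝ) < ∏ j ∈ Finset.range (n + 1), ‖z + (j : ℂ)‖ :=
      Finset.prod_pos fun j _ => hCz j
    have hA : (0 : ℝ) < (n : ℝ) ^ x * (n.factorial : ℝ) := by positivity
    have hcx : ‖(n : ℂ) ^ (x : ℂ)‖ = (n : ℝ) ^ x := by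
      rw [← Complex.ofReal_natCast, Complex.norm_cpow_eq_rpow_re_of_pos hn0]
      simp
    have hcz : ‖(n : ℂ) ^ z‖ = (n : ℝ) ^ x := by
      rw [← Complex.ofReal_natCast, Complex.norm_cpow_eq_rpow_re_of_pos hn0]
      simp [hz]
    have hGx : ‖Complex.GammaSeq (x : ℂ) n‖
        = (n : ℝ) ^ x * n.factorial / ∏ j ∈ Finset.range (n + 1), (x + (j : ℝ)) := by
      rw [Complex.GammaSeq, norm_div, norm_mul, norm_prod, hcx,
        Finset.prod_congr rfl hax]
      norm_num
    have hGz : ‖Complex.GammaSeq z n‖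
        = (n : ℝ) ^ x * n.factorial / ∏ j ∈ Finset.range (n + 1), ‖z + (j : ℂ)‖ := by
      rw [Complex.GammaSeq, norm_div, norm_mul, norm_prod, hcz]
      norm_num
    rw [hGx, hGz]
    have hstep : (n : ℝ) ^ x * n.factorial / (∏ j ∈ Finset.range (n + 1), (x + (j : ℝ))) /
        ((n : ℝ) ^ x * n.factorial / ∏ j ∈ Finset.range (n + 1), ‖z + (j : ℂ)‖)
        = (∏ j ∈ Finset.range (n + 1), ‖z + (j : ℂ)‖) /
          ∏ j ∈ Finset.range (n + 1), (x + (j : ℝ)) := by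
      rw [div_div_div_comm, div_self hA.ne', one_div, inv_div]
    rw [hstep, div_pow, ← Finset.prod_pow, ← Finset.prod_pow,
      Finset.prod_congr rfl fun j _ => haz j, ← Finset.prod_div_distrib, hP]
    refine Finset.prod_congr rfl fun j _ => ?_
    field_simp
  have hPlim : Filter.Tendsto (fun n => P (n + 1)) atTop
      (𝓝 ((Real.Gamma x / ‖Complex.Gamma z‖) ^ 2)) := by
    have hre : ‖Complex.Gamma (x : ℂ)‖ = Real.Gamma x := by
      rw [Complex.Gamma_ofReal, Complex.norm_real, Real.norm_eq_abs, abs_of_pos (Real.Gamma_pos_of_pos hx)]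
    rw [← hre]
    exact hdiv.congr' (by filter_upwards [Filter.eventually_ge_atTop 1] with n hn using key n hn)
  have hcomp : ∀ n : ℕ, P (n + 1) ≤ (1 + y ^ 2 / x ^ 2) * Q n := by
    intro n
    simp only [hP, hQ]
    rw [Finset.prod_range_succ']
    simp only [Nat.cast_zero, add_zero, Nat.cast_add, Nat.cast_one]
    rw [mul_comm]
    apply mul_le_mul_of_nonneg_left _ (by positivity)
    apply Finset.prod_le_prod (fun j _ => by positivity)
    intro j _
    have hj : (0 : ℝ) ≤ (j : ℝ) := Nat.cast_nonneg j
    gcongr 1 + y ^ 2 / ?_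
    nlinarith
  have hRHSlim : Filter.Tendsto (fun n => (1 + y ^ 2 / x ^ 2) * Q n) atTop
      (𝓝 ((1 + y ^ 2 / x ^ 2) * (Real.sinh (Real.pi * y) / (Real.pi * y)))) :=
    hQlim.const_mul _
  exact le_of_tendsto_of_tendsto' hPlim hRHSlim hcomp
end

section
/- For complex s with Re(s) > 0, integer n ≥ 1, real h > 0, and t > 0, the iterated difference of t ↦ t^{−s} satisfies (−Δ_h)^n (t^{−s}) = (Γ(s+n)/Γ(s)) ∫_{[0,h]^n} (t + u₁ + ⋯ + u_n)^{−s−n} du₁⋯du_n. -/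
open MeasureTheory Set fwdDiff

namespace NegFwdDiffAux

lemma contOn (n : ℕ) (c : ℂ) (t : ℝ) (ht : 0 < t) (h : ℝ) :
    ContinuousOn (fun u : Fin n → ℝ => ((t + ∑ i, u i : ℝ) : ℂ) ^ c)
      (Set.univ.pi fun _ : Fin n => Icc (0:ℝ) h) := by
  apply ContinuousOn.cpow_const
  · apply Continuous.continuousOn
    exact Complex.continuous_ofReal.comp
      (continuous_const.add (continuous_finset_sum _ fun i _ => continuous_apply i))
  · intro u hu
    have h0 : 0 ≤ ∑ i, u i := Finset.sum_nonneg fun i _ => (hu i (Set.mem_univ i)).1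
    have : (0:ℝ) < t + ∑ i, u i := by linarith
    exact Or.inl (by simpa using this)

lemma intgOn (n : ℕ) (c : ℂ) (t : ℝ) (ht : 0 < t) (h : ℝ) :
    IntegrableOn (fun u : Fin n → ℝ => ((t + ∑ i, u i : ℝ) : ℂ) ^ c)
      (Set.univ.pi fun _ : Fin n => Icc (0:ℝ) h) :=
  (contOn n c t ht h).integrableOn_compact (isCompact_univ_pi fun _ => isCompact_Icc)

lemma oneDim (z : ℂ) (hz : z ≠ 0) (h : ℝ) (hh : 0 < h) (y : ℝ) (hy : 0 < y) :
    ∫ v in Icc (0:ℝ) h, ((y + v : ℝ) : ℂ) ^ (-(z+1)) =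
      (((y : ℝ) : ℂ) ^ (-z) - ((y + h : ℝ) : ℂ) ^ (-z)) / z := by
  have h1 : ∫ v in Icc (0:ℝ) h, ((y + v : ℝ) : ℂ) ^ (-(z+1)) =
      ∫ v in (0:ℝ)..h, ((y + v : ℝ) : ℂ) ^ (-(z+1)) := by
    rw [intervalIntegral.integral_of_le hh.le, integral_Icc_eq_integral_Ioc]
  have h2 := intervalIntegral.integral_comp_add_left (a := (0:ℝ)) (b := h)
    (fun x : ℝ => (x : ℂ) ^ (-(z+1))) y
  rw [h1, h2, integral_cpow (Or.inr ⟨by intro H; apply hz; linear_combination -H, ?_⟩)]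
  · have : -(z+1) + 1 = -z := by ring
    rw [this]
    rw [div_eq_div_iff (by simpa using hz) hz] <;> try skip
    push_cast
    ring
  · rw [Set.uIcc_of_le (by linarith)]
    intro H
    have := H.1
    linarith

lemma intg1 (c : ℂ) (y : ℝ) (hy : 0 < y) (h : ℝ) :
    IntegrableOn (fun v : ℝ => ((y + v : ℝ) : ℂ) ^ c) (Icc (0:ℝ) h) := by
  apply ContinuousOn.integrableOn_compact isCompact_Icc
  apply ContinuousOn.cpow_const
  · fun_prop
  · intro v hv
    have : (0:ℝ) < y + v := by linarith [hv.1]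
    exact Or.inl (by simpa using this)

lemma key (h : ℝ) (hh : 0 < h) : ∀ (n : ℕ) (z : ℂ), 0 < z.re → ∀ t : ℝ, 0 < t →
    (∏ i ∈ Finset.range n, (z + i)) *
        ∫ u in Set.univ.pi (fun _ : Fin n => Icc (0:ℝ) h), ((t + ∑ i, u i : ℝ) : ℂ) ^ (-z - n)
      = ((-1 : ℂ) ^ n) * (fwdDiff h)^[n] (fun x : ℝ => (x : ℂ) ^ (-z)) t := by
  intro n
  induction n with
  | zero =>
    intro z hz t ht
    simp only [Finset.range_zero, Finset.prod_empty, one_mul, Function.iterate_zero, id_eq,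
      pow_zero, Nat.cast_zero, sub_zero, Finset.univ_eq_empty, Finset.sum_empty, add_zero]
    rw [setIntegral_const]
    rw [measureReal_def, volume_pi_pi]
    simp
  | succ n ih =>
    intro z hz t ht
    have hz0 : z ≠ 0 := by
      intro H; rw [H] at hz; simp at hz
    have hz1 : 0 < (z + 1).re := by
      rw [Complex.add_re, Complex.one_re]; linarith
    set e : ℝ × (Fin n → ℝ) ≃ᵐ (Fin (n+1) → ℝ) :=
      (MeasurableEquiv.piFinSuccAbove (fun _ : Fin (n+1) => ℝ) 0).symm with he
    have hem : MeasurePreserving e :=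
      (volume_preserving_piFinSuccAbove (fun _ : Fin (n + 1) => ℝ) 0).symm _
    have hecons : ∀ (v : ℝ) (u : Fin n → ℝ), e (v, u) = Fin.cons v u := by
      intro v u
      ext i
      simp only [he, MeasurableEquiv.piFinSuccAbove_symm_apply, Fin.insertNthEquiv,
        Equiv.coe_fn_mk, Fin.insertNth_zero']
    have hpre : e ⁻¹' (Set.univ.pi fun _ : Fin (n+1) => Icc (0:ℝ) h)
        = Icc (0:ℝ) h ×ˢ (Set.univ.pi fun _ : Fin n => Icc (0:ℝ) h) := by
      ext ⟨v, u⟩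
      simp only [Set.mem_preimage, Set.mem_pi, Set.mem_univ, forall_const, Set.mem_prod,
        hecons, Fin.forall_fin_succ, Fin.cons_zero, Fin.cons_succ]
    have hint := intgOn (n+1) (-z - ((n+1 : ℕ) : ℂ)) t ht h
    have split : (∫ u in Set.univ.pi (fun _ : Fin (n+1) => Icc (0:ℝ) h),
          ((t + ∑ i, u i : ℝ) : ℂ) ^ (-z - ((n+1 : ℕ) : ℂ)))
        = ∫ v in Icc (0:ℝ) h, ∫ u in Set.univ.pi (fun _ : Fin n => Icc (0:ℝ) h),
            (((t + v) + ∑ i, u i : ℝ) : ℂ) ^ (-(z+1) - n) := by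
      rw [← hem.map_eq, setIntegral_map_equiv, hpre, Measure.volume_eq_prod, setIntegral_prod]
      · refine setIntegral_congr_fun measurableSet_Icc fun v hv => ?_
        refine setIntegral_congr_fun (MeasurableSet.univ_pi fun _ => measurableSet_Icc)
          fun u hu => ?_
        have hsum : ∑ i, (e (v, u)) i = v + ∑ i, u i := by
          rw [hecons, Fin.sum_univ_succ]
          simp
        show ((t + ∑ i, (e (v, u)) i : ℝ) : ℂ) ^ (-z - ((n+1 : ℕ) : ℂ))
            = (((t + v) + ∑ i, u i : ℝ) : ℂ) ^ (-(z+1) - n)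
        rw [hsum]
        congr 1
        · push_cast; ring
        · push_cast; ring
      · rwa [← hem.integrableOn_comp_preimage e.measurableEmbedding, hpre] at hint
    have hprod : ∏ i ∈ Finset.range (n+1), (z + (i:ℂ))
        = z * ∏ i ∈ Finset.range n, ((z+1) + (i:ℂ)) := by
      rw [Finset.prod_range_succ']
      simp only [Nat.cast_add, Nat.cast_one, Nat.cast_zero, add_zero]
      rw [mul_comm]
      congr 1
      exact Finset.prod_congr rfl fun i _ => by ring
    have hkh : ∀ k : ℕ, (0:ℝ) < t + k • h := by
      intro k
      have : (0:ℝ) ≤ k • h := nsmul_nonneg hh.le k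
      linarith
    calc (∏ i ∈ Finset.range (n+1), (z + (i:ℂ))) *
          ∫ u in Set.univ.pi (fun _ : Fin (n+1) => Icc (0:ℝ) h),
            ((t + ∑ i, u i : ℝ) : ℂ) ^ (-z - ((n+1 : ℕ) : ℂ))
        = z * ∫ v in Icc (0:ℝ) h, (∏ i ∈ Finset.range n, ((z+1) + (i:ℂ))) *
            ∫ u in Set.univ.pi (fun _ : Fin n => Icc (0:ℝ) h),
              (((t + v) + ∑ i, u i : ℝ) : ℂ) ^ (-(z+1) - n) := by
          rw [split, hprod, mul_assoc, ← MeasureTheory.integral_const_mul]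
      _ = z * ∫ v in Icc (0:ℝ) h,
            ((-1:ℂ)^n) * (fwdDiff h)^[n] (fun x : ℝ => (x : ℂ) ^ (-(z+1))) (t+v) := by
          congr 1
          refine setIntegral_congr_fun measurableSet_Icc fun v hv => ?_
          exact ih (z+1) hz1 (t+v) (by have := hv.1; linarith)
      _ = z * ((-1:ℂ)^n * ∫ v in Icc (0:ℝ) h,
            ∑ k ∈ Finset.range (n+1), ((-1:ℂ)^(n-k) * (n.choose k : ℂ)) *
              (((t + k • h) + v : ℝ) : ℂ) ^ (-(z+1))) := by
          rw [MeasureTheory.integral_const_mul]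
          congr 2
          refine setIntegral_congr_fun measurableSet_Icc fun v hv => ?_
          rw [fwdDiff_iter_eq_sum_shift]
          refine Finset.sum_congr rfl fun k _ => ?_
          rw [add_right_comm t v (k • h)]
          simp only [zsmul_eq_mul, Int.cast_mul, Int.cast_pow, Int.cast_neg, Int.cast_one,
            Int.cast_natCast]
      _ = z * ((-1:ℂ)^n * ∑ k ∈ Finset.range (n+1), ((-1:ℂ)^(n-k) * (n.choose k : ℂ)) *
            ((((t + k • h : ℝ)) : ℂ) ^ (-z) - (((t + k • h + h : ℝ)) : ℂ) ^ (-z)) / z) := by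
          congr 1
          rw [integral_finset_sum]
          · congr 1
            refine Finset.sum_congr rfl fun k _ => ?_
            rw [MeasureTheory.integral_const_mul, oneDim z hz0 h hh (t + k • h) (hkh k)]
            ring
          · intro k _
            exact ((intg1 (-(z+1)) (t + k • h) (hkh k) h).const_mul _)
      _ = ((-1:ℂ)^(n+1)) * (fwdDiff h)^[n+1] (fun x : ℝ => (x : ℂ) ^ (-z)) t := by
          rw [Function.iterate_succ_apply, fwdDiff_iter_eq_sum_shift]
          simp only [fwdDiff, zsmul_eq_mul, Int.cast_mul, Int.cast_pow, Int.cast_neg,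
            Int.cast_one, Int.cast_natCast]
          rw [Finset.mul_sum, Finset.mul_sum, Finset.mul_sum]
          refine Finset.sum_congr rfl fun k _ => ?_
          have hm : (-1:ℂ)^(n+1) = -((-1:ℂ)^n) := by ring
          field_simp
          ring

end NegFwdDiffAux

theorem neg_fwdDiff_iter_cpow
    (s : ℂ) (hs : 0 < s.re) (n : ℕ) (hn : 1 ≤ n) (h : ℝ) (hh : 0 < h)
    (t : ℝ) (ht : 0 < t) :
    ((-1 : ℂ) ^ n) * (fwdDiff h)^[n] (fun x : ℝ => (x : ℂ) ^ (-s)) t =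
      (Complex.Gamma (s + n) / Complex.Gamma s) *
        ∫ u in Set.univ.pi (fun _ : Fin n => Icc (0:ℝ) h),
          ((t + ∑ i, u i : ℝ) : ℂ) ^ (-s - n) := by
  rw [← NegFwdDiffAux.key h hh n s hs t ht]
  congr 1
  clear hn ht
  induction n with
  | zero => simp [div_self (Complex.Gamma_ne_zero_of_re_pos hs)]
  | succ n ihn =>
    rw [Finset.prod_range_succ, ihn]
    have hsn : s + (n:ℂ) ≠ 0 := by
      intro H
      have : (s + (n:ℂ)).re = 0 := by rw [H]; simp
      simp only [Complex.add_re, Complex.natCast_re] at this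
      have : (0:ℝ) ≤ (n:ℝ) := Nat.cast_nonneg n
      linarith [hs]
    have : (s + ((n+1 : ℕ) : ℂ)) = (s + n) + 1 := by push_cast; ring
    rw [this, Complex.Gamma_add_one _ hsn, mul_comm ((s:ℂ) + n), mul_div_assoc]
    ring
end

section
/- Let w be a complex number with |w| ≤ 1 and w ≠ 1. Then the Lerch series Φ(s,w,t) = ∑_{n≥0} w^n/(n+t)^s, for t > 0, converges for Re(s) > 0, and the Bernoulli-type polynomials B_n(t) defined by the generating function ∑_{n≥0} B_n(t) u^n/n! = e^{tu}/(1−we^u) satisfy B_0(t) = 1/(1−w), and each B_n(t) is a polynomial of degree n in t with leading coefficient 1/(1−w). -/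
open Filter Finset PowerSeries Polynomial

/-! ### Auxiliary: the Lerch–Bernoulli polynomials -/

noncomputable def lerchB (w : ℂ) : ℕ → Polynomial ℂ
  | n => Polynomial.C (1/(1-w)) * (Polynomial.X ^ n +
      Polynomial.C w * ∑ j ∈ (Finset.range n).attach,
        Polynomial.C (n.choose j.1 : ℂ) * lerchB w j.1)
  decreasing_by exact Finset.mem_range.mp j.2

lemma lerchB_def (w : ℂ) (n : ℕ) : lerchB w n = Polynomial.C (1/(1-w)) * (Polynomial.X ^ n +
      Polynomial.C w * ∑ j ∈ Finset.range n, Polynomial.C (n.choose j : ℂ) * lerchB w j) := by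
  rw [lerchB, Finset.sum_attach (Finset.range n)
    (fun j => Polynomial.C (n.choose j : ℂ) * lerchB w j)]

lemma lerchB_rec {w : ℂ} (hw1 : w ≠ 1) (n : ℕ) :
    Polynomial.C (1-w) * lerchB w n = Polynomial.X ^ n +
      Polynomial.C w * ∑ j ∈ Finset.range n, Polynomial.C (n.choose j : ℂ) * lerchB w j := by
  have h1 : (1:ℂ) - w ≠ 0 := sub_ne_zero.mpr (Ne.symm hw1)
  rw [lerchB_def, ← mul_assoc, ← Polynomial.C_mul, mul_one_div, div_self h1,
    Polynomial.C_1, one_mul]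

lemma degree_C_mul_le' {R : Type*} [CommRing R] (c : R) (p : R[X]) :
    (Polynomial.C c * p).degree ≤ p.degree := by
  refine (degree_mul_le _ _).trans ?_
  calc (Polynomial.C c).degree + p.degree ≤ 0 + p.degree := add_le_add degree_C_le le_rfl
    _ = p.degree := zero_add _

lemma lerchB_deg (w : ℂ) :
    ∀ n : ℕ, (lerchB w n).degree ≤ n ∧ (lerchB w n).coeff n = 1/(1-w) := by
  intro n
  induction n using Nat.strong_induction_on with
  | _ n ih =>
    have hS : (∑ j ∈ Finset.range n, Polynomial.C (n.choose j : ℂ) * lerchB w j).degree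
        < (n : WithBot ℕ) := by
      refine lt_of_le_of_lt (Polynomial.degree_sum_le _ _) ?_
      rw [Finset.sup_lt_iff (by exact_mod_cast WithBot.bot_lt_coe n)]
      intro j hj
      refine lt_of_le_of_lt ((degree_C_mul_le' _ _).trans (ih j (Finset.mem_range.mp hj)).1) ?_
      exact_mod_cast Finset.mem_range.mp hj
    have hQdeg : (Polynomial.X ^ n + Polynomial.C w *
        ∑ j ∈ Finset.range n, Polynomial.C (n.choose j : ℂ) * lerchB w j : Polynomial ℂ).degree
        ≤ (n : WithBot ℕ) := by
      refine (Polynomial.degree_add_le _ _).trans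
        (max_le (by simpa using Polynomial.degree_X_pow_le n) ?_)
      exact ((degree_C_mul_le' _ _).trans hS.le)
    constructor
    · rw [lerchB_def]
      exact (degree_C_mul_le' _ _).trans hQdeg
    · rw [lerchB_def, Polynomial.coeff_C_mul, Polynomial.coeff_add, Polynomial.coeff_X_pow,
        Polynomial.coeff_C_mul,
        Polynomial.coeff_eq_zero_of_degree_lt hS]
      simp

lemma exp_coeff_poly (m : ℕ) :
    (PowerSeries.coeff (R := Polynomial ℂ) m) (PowerSeries.exp (Polynomial ℂ))
      = Polynomial.C ((m.factorial : ℂ))⁻¹ := by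
  rw [PowerSeries.coeff_exp]
  rw [Polynomial.algebraMap_apply]
  norm_num

lemma lerchB_gen {w : ℂ} (hw1 : w ≠ 1) :
    ((1 - PowerSeries.C (R := Polynomial ℂ) (Polynomial.C w) *
          PowerSeries.exp (Polynomial ℂ)) *
        PowerSeries.mk (fun n => Polynomial.C ((n.factorial : ℂ))⁻¹ * lerchB w n) =
      PowerSeries.mk (fun n => Polynomial.C ((n.factorial : ℂ))⁻¹ * Polynomial.X ^ n)) := by
  ext n
  rw [sub_mul, one_mul, map_sub, PowerSeries.coeff_mk, PowerSeries.coeff_mk]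
  rw [mul_assoc, PowerSeries.coeff_C_mul, mul_comm (PowerSeries.exp _)]
  rw [PowerSeries.coeff_mul]
  rw [Finset.Nat.sum_antidiagonal_eq_sum_range_succ
    (fun i j => (PowerSeries.coeff (R := Polynomial ℂ) i)
      (PowerSeries.mk fun n => Polynomial.C ((n.factorial : ℂ))⁻¹ * lerchB w n) *
      (PowerSeries.coeff (R := Polynomial ℂ) j) (PowerSeries.exp (Polynomial ℂ))) n]
  simp only [PowerSeries.coeff_mk, exp_coeff_poly]
  rw [Finset.sum_range_succ]
  simp only [Nat.sub_self, Nat.factorial_zero, Nat.cast_one, inv_one, Polynomial.C_1, mul_one]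
  have key := lerchB_rec hw1 n
  have hfac : ∀ j ∈ Finset.range n,
      Polynomial.C ((j.factorial : ℂ))⁻¹ * lerchB w j * Polynomial.C (((n-j).factorial : ℂ))⁻¹
        = Polynomial.C ((n.factorial : ℂ))⁻¹
            * (Polynomial.C ((n.choose j : ℂ)) * lerchB w j) := by
    intro j hj
    have hj' : j ≤ n := (Finset.mem_range.mp hj).le
    have : ((n.choose j : ℂ)) * ((n.factorial : ℂ))⁻¹
        = ((j.factorial : ℂ))⁻¹ * (((n-j).factorial : ℂ))⁻¹ := by
      have hh : ((n.choose j : ℕ) : ℂ) * (j.factorial : ℂ) * ((n-j).factorial : ℂ)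
          = (n.factorial : ℂ) := by
        exact_mod_cast congrArg (Nat.cast : ℕ → ℂ)
          (Nat.choose_mul_factorial_mul_factorial hj')
      have h1 : (j.factorial : ℂ) ≠ 0 := Nat.cast_ne_zero.mpr j.factorial_ne_zero
      have h2 : ((n-j).factorial : ℂ) ≠ 0 := Nat.cast_ne_zero.mpr (n-j).factorial_ne_zero
      have h3 : (n.factorial : ℂ) ≠ 0 := Nat.cast_ne_zero.mpr n.factorial_ne_zero
      field_simp
      linear_combination hh
    rw [mul_right_comm, ← Polynomial.C_mul, ← this, Polynomial.C_mul]
    ring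
  rw [Finset.sum_congr rfl hfac, ← Finset.mul_sum]
  have expand : Polynomial.C ((n.factorial : ℂ))⁻¹ * lerchB w n -
      Polynomial.C w * (Polynomial.C ((n.factorial : ℂ))⁻¹ *
        (∑ j ∈ Finset.range n, Polynomial.C ((n.choose j : ℂ)) * lerchB w j)
        + Polynomial.C ((n.factorial : ℂ))⁻¹ * lerchB w n)
      = Polynomial.C ((n.factorial : ℂ))⁻¹ * (Polynomial.C (1-w) * lerchB w n
          - Polynomial.C w
              * ∑ j ∈ Finset.range n, Polynomial.C ((n.choose j : ℂ)) * lerchB w j) := by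
    rw [map_sub, Polynomial.C_1]
    ring
  rw [expand, key]
  ring

/-! ### Auxiliary: Dirichlet test and convergence -/

lemma dirichlet_cauchy {f z : ℕ → ℂ} {b : ℝ}
    (hf0 : Tendsto f atTop (nhds 0))
    (hfv : Summable fun n => ‖f (n+1) - f n‖)
    (hzb : ∀ n, ‖∑ i ∈ Finset.range n, z i‖ ≤ b) :
    CauchySeq fun n => ∑ i ∈ Finset.range n, f i * z i := by
  simp_rw [← smul_eq_mul]
  rw [← cauchySeq_shift 1]
  simp_rw [Finset.sum_range_by_parts _ _ (Nat.succ _), sub_eq_add_neg, Nat.succ_sub_succ_eq_sub,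
    tsub_zero]
  apply (NormedField.tendsto_zero_smul_of_tendsto_zero_of_bounded hf0
    ⟨b, eventually_map.mpr <| Eventually.of_forall fun n ↦ hzb <| n + 1⟩).cauchySeq.add
  refine CauchySeq.neg ?_
  refine cauchySeq_range_of_norm_bounded (g := fun n => ‖f (n+1) - f n‖ * b) ?_ ?_
  · exact ((hfv.mul_right b).hasSum.tendsto_sum_nat).cauchySeq
  · intro n
    rw [norm_smul, ← sub_eq_add_neg]
    exact mul_le_mul_of_nonneg_left (hzb _) (norm_nonneg _)

lemma lerch_conv {w : ℂ} (hw : ‖w‖ ≤ 1) (hw1 : w ≠ 1) (t : ℝ) (ht : 0 < t) (s : ℂ)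
    (hs : 0 < s.re) :
    ∃ L : ℂ, Tendsto (fun N : ℕ => ∑ n ∈ Finset.range N, w ^ n / ((n + t : ℝ) : ℂ) ^ s)
      atTop (nhds L) := by
  set f : ℕ → ℂ := fun n => ((n + t : ℝ) : ℂ) ^ (-s) with hfdef
  have hpos : ∀ n : ℕ, 0 < (n : ℝ) + t := fun n => by positivity
  have hnorm : ∀ n : ℕ, ‖f n‖ = ((n : ℝ) + t) ^ (-s.re) := by
    intro n
    rw [hfdef]
    rw [Complex.norm_cpow_eq_rpow_re_of_pos (hpos n)]
    simp
  -- f tends to 0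
  have hf0 : Tendsto f atTop (nhds 0) := by
    rw [tendsto_zero_iff_norm_tendsto_zero]
    simp_rw [hnorm]
    have h1 : Tendsto (fun n : ℕ => (n : ℝ) + t) atTop atTop :=
      tendsto_atTop_add_const_right _ t tendsto_natCast_atTop_atTop
    exact (tendsto_rpow_neg_atTop hs).comp h1
  -- bounded variation
  have hbound : ∀ n : ℕ, ‖f (n+1) - f n‖ ≤ ‖s‖ * ((n : ℝ) + t) ^ (-s.re - 1) := by
    intro n
    set a : ℝ := (n : ℝ) + t with ha
    have ha0 : 0 < a := hpos n
    have hderiv : ∀ x ∈ Set.Icc a (a+1),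
        HasDerivWithinAt (fun y : ℝ => ((y : ℂ)) ^ (-s)) (-s * (x : ℂ) ^ (-s - 1))
          (Set.Icc a (a+1)) x := by
      intro x hx
      have hx0 : 0 < x := lt_of_lt_of_le ha0 hx.1
      exact ((Complex.hasStrictDerivAt_cpow_const
        (Complex.ofReal_mem_slitPlane.mpr hx0)).hasDerivAt.comp_ofReal).hasDerivWithinAt
    have hbnd : ∀ x ∈ Set.Icc a (a+1), ‖-s * (x : ℂ) ^ (-s - 1)‖ ≤ ‖s‖ * a ^ (-s.re - 1) := by
      intro x hx
      have hx0 : 0 < x := lt_of_lt_of_le ha0 hx.1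
      rw [norm_mul, norm_neg]
      refine mul_le_mul_of_nonneg_left ?_ (norm_nonneg s)
      rw [Complex.norm_cpow_eq_rpow_re_of_pos hx0]
      have hre : (-s - 1).re = -s.re - 1 := by simp
      rw [hre]
      exact Real.rpow_le_rpow_of_nonpos ha0 hx.1 (by linarith)
    have key := (convex_Icc a (a+1)).norm_image_sub_le_of_norm_hasDerivWithin_le hderiv hbnd
      (Set.left_mem_Icc.mpr (by linarith)) (Set.right_mem_Icc.mpr (by linarith))
    have hcast1 : f (n+1) = ((a + 1 : ℝ) : ℂ) ^ (-s) := by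
      rw [hfdef, ha]; push_cast; ring_nf
    have hcast0 : f n = ((a : ℝ) : ℂ) ^ (-s) := rfl
    rw [hcast1, hcast0]
    simpa using key
  have hsumv : Summable (fun n : ℕ => ‖f (n+1) - f n‖) := by
    refine Summable.of_nonneg_of_le (fun n => norm_nonneg _) hbound ?_
    apply Summable.mul_left
    set m : ℝ := min t 1 with hm
    have hm0 : 0 < m := lt_min ht one_pos
    have hsum1 : Summable (fun n : ℕ => ((n : ℝ)) ^ (-s.re - 1)) :=
      Real.summable_nat_rpow.mpr (by linarith)
    have hsum2 : Summable (fun n : ℕ => (((n+1 : ℕ) : ℝ)) ^ (-s.re - 1)) :=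
      (summable_nat_add_iff 1).mpr hsum1
    refine Summable.of_nonneg_of_le (fun n => Real.rpow_nonneg (hpos n).le _)
      (fun n => ?_) (hsum2.mul_left (m ^ (-s.re - 1)))
    rw [← Real.mul_rpow hm0.le (by positivity)]
    refine Real.rpow_le_rpow_of_nonpos (by positivity) ?_ (by linarith)
    have h1 : m ≤ t := min_le_left _ _
    have h2 : m ≤ 1 := min_le_right _ _
    push_cast
    nlinarith [Nat.cast_nonneg (α := ℝ) n]
  -- bounded partial sums of w^i
  have hzb : ∀ n : ℕ, ‖∑ i ∈ Finset.range n, w ^ i‖ ≤ 2 / ‖1 - w‖ := by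
    intro n
    have hw0 : (0:ℝ) < ‖w - 1‖ := norm_pos_iff.mpr (sub_ne_zero.mpr hw1)
    rw [geom_sum_eq hw1, norm_div, norm_sub_rev (1:ℂ) w]
    gcongr
    calc ‖w ^ n - 1‖ ≤ ‖w ^ n‖ + ‖(1:ℂ)‖ := norm_sub_le _ _
      _ = ‖w‖ ^ n + 1 := by simp
      _ ≤ 1 + 1 := by gcongr; exact pow_le_one₀ (norm_nonneg w) hw
      _ = 2 := by norm_num
  -- conclude
  have hc : CauchySeq (fun N : ℕ => ∑ n ∈ Finset.range N, f n * w ^ n) :=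
    dirichlet_cauchy hf0 hsumv hzb
  have heq : ∀ N : ℕ, ∑ n ∈ Finset.range N, w ^ n / ((n + t : ℝ) : ℂ) ^ s
      = ∑ n ∈ Finset.range N, f n * w ^ n := by
    intro N
    refine Finset.sum_congr rfl (fun n _ => ?_)
    show _ = ((n + t : ℝ) : ℂ) ^ (-s) * w ^ n
    rw [Complex.cpow_neg, div_eq_mul_inv, mul_comm]
  obtain ⟨L, hL⟩ := cauchySeq_tendsto_of_complete hc
  exact ⟨L, by simpa only [heq] using hL⟩

theorem lerch_convergence_and_bernoulli_polys (w : ℂ) (hw : ‖w‖ ≤ 1) (hw1 : w ≠ 1) :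
    (∀ t : ℝ, 0 < t → ∀ s : ℂ, 0 < s.re →
      ∃ L : ℂ, Tendsto
        (fun N : ℕ => ∑ n ∈ Finset.range N, w ^ n / ((n + t : ℝ) : ℂ) ^ s)
        atTop (nhds L)) ∧
    ∃ B : ℕ → Polynomial ℂ,
      ((1 - PowerSeries.C (R := Polynomial ℂ) (Polynomial.C w) *
            PowerSeries.exp (Polynomial ℂ)) *
          PowerSeries.mk (fun n => Polynomial.C ((n.factorial : ℂ))⁻¹ * B n) =
        PowerSeries.mk (fun n => Polynomial.C ((n.factorial : ℂ))⁻¹ * Polynomial.X ^ n)) ∧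
      B 0 = Polynomial.C (1 / (1 - w)) ∧
      ∀ n : ℕ, (B n).natDegree = n ∧ (B n).leadingCoeff = 1 / (1 - w) := by
  have hwne : (1:ℂ) - w ≠ 0 := sub_ne_zero.mpr (Ne.symm hw1)
  have hane : (1:ℂ) / (1 - w) ≠ 0 := one_div_ne_zero hwne
  refine ⟨fun t ht s hs => lerch_conv hw hw1 t ht s hs, lerchB w, lerchB_gen hw1, ?_, ?_⟩
  · rw [lerchB_def]
    simp
  · intro n
    obtain ⟨hdeg, hcoeff⟩ := lerchB_deg w n
    have hcne : (lerchB w n).coeff n ≠ 0 := hcoeff ▸ hane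
    have hd : (lerchB w n).degree = n :=
      le_antisymm hdeg (Polynomial.le_degree_of_ne_zero hcne)
    have hnd : (lerchB w n).natDegree = n := Polynomial.natDegree_eq_of_degree_eq_some hd
    exact ⟨hnd, by rw [Polynomial.leadingCoeff, hnd, hcoeff]⟩
end

section
/- For Re(s) > 1 and t > 0, the series ∑_{n≥0} (−1)^n/(t+n)^s converges absolutely, and the function admits an entire continuation in s; in particular its value at s = −m for an integer m ≥ 0 equals E_m(t)/2 where E_m is the m-th Euler polynomial defined by ∑_{m≥0} E_m(t)u^m/m! = 2e^{tu}/(e^u+1). -/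
open MeasureTheory Set Filter PowerSeries Polynomial

namespace AltHZ

/-- base function: `x ^ (-s)` for a real base. -/
noncomputable def b (x : ℝ) (s : ℂ) : ℂ := (x : ℂ) ^ (-s)

/-- iterated forward difference of `b · s` in the real variable. -/
noncomputable def D (k : ℕ) (s : ℂ) : ℝ → ℂ := (fwdDiff (1:ℝ))^[k] (fun x => b x s)

lemma D_zero (s : ℂ) : D 0 s = fun x => b x s := rfl

lemma D_succ (k : ℕ) (s : ℂ) (x : ℝ) : D (k+1) s x = D k s (x+1) - D k s x := by
  rw [D, Function.iterate_succ_apply']; rfl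

lemma D_eq_sum (k : ℕ) (s : ℂ) (x : ℝ) :
    D k s x = ∑ i ∈ Finset.range (k+1),
      ((-1 : ℂ)) ^ (k - i) * (k.choose i : ℂ) * b (x + i) s := by
  rw [D, fwdDiff_iter_eq_sum_shift]
  refine Finset.sum_congr rfl fun i _ => ?_
  rw [zsmul_eq_mul, nsmul_eq_mul, mul_one]
  push_cast
  ring

lemma norm_b {x : ℝ} (hx : 0 < x) (s : ℂ) : ‖b x s‖ = x ^ (-s.re) := by
  rw [b, Complex.norm_cpow_eq_rpow_re_of_pos hx, Complex.neg_re]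

lemma b_diff {x : ℝ} (hx : 0 < x) : Differentiable ℂ (fun s => b x s) := by
  have hx' : (x : ℂ) ≠ 0 := by exact_mod_cast hx.ne'
  have : (fun s => b x s) = fun s => Complex.exp (Complex.log x * (-s)) := by
    funext s; rw [b, Complex.cpow_def_of_ne_zero hx']
  rw [this]
  exact Complex.differentiable_exp.comp ((differentiable_const _).mul differentiable_neg)

lemma hasDerivAt_b {x : ℝ} (hx : 0 < x) (s : ℂ) :
    HasDerivAt (fun y : ℝ => b y s) (-s * b x (s+1)) x := by
  have h1 : HasDerivAt (fun z : ℂ => z ^ (-s)) (-s * (x:ℂ) ^ (-s - 1)) x := by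
    have := (Complex.hasStrictDerivAt_cpow_const (c := -s)
      (x := (x:ℂ)) (by left; simpa using hx)).hasDerivAt
    exact this
  have h2 := h1.comp_ofReal (z := x)
  convert h2 using 2
  · rfl
  rw [b]; congr 1; ring

lemma hasDerivAt_D (k : ℕ) (s : ℂ) {x : ℝ} (hx : 0 < x) :
    HasDerivAt (D k s) (-s * D k (s+1) x) x := by
  have key : ∀ (σ : ℂ), D k σ = fun y => ∑ i ∈ Finset.range (k+1),
      ((-1 : ℂ)) ^ (k - i) * (k.choose i : ℂ) * b (y + i) σ := fun σ => funext (D_eq_sum k σ)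
  rw [key s, key (s+1)]
  have : ∀ i ∈ Finset.range (k+1), HasDerivAt
      (fun y : ℝ => ((-1 : ℂ)) ^ (k - i) * (k.choose i : ℂ) * b (y + i) s)
      (((-1 : ℂ)) ^ (k - i) * (k.choose i : ℂ) * (-s * b (x + i) (s+1))) x := by
    intro i _
    have hxi : 0 < x + i := by positivity
    have hcomp := HasDerivAt.comp_add_const (f := fun y : ℝ => b y s) x (i:ℝ) (hasDerivAt_b hxi s)
    simpa using hcomp.const_mul (((-1 : ℂ)) ^ (k - i) * (k.choose i : ℂ))
  have hsum := HasDerivAt.fun_sum this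
  convert hsum using 1
  · rfl
  rw [Finset.mul_sum]
  refine Finset.sum_congr rfl fun i _ => ?_
  ring

lemma norm_D_le : ∀ (k : ℕ) (s : ℂ), 0 < s.re + k → ∀ (x : ℝ), 0 < x →
    ‖D k s x‖ ≤ (∏ i ∈ Finset.range k, ‖s + i‖) * x ^ (-(s.re + k)) := by
  intro k
  induction k with
  | zero =>
    intro s hs x hx
    simp [D_zero, norm_b hx]
  | succ k IH =>
    intro s hs x hx
    have hre : 0 < (s+1).re + k := by
      simp only [Complex.add_re, Complex.one_re]
      push_cast at hs ⊢; linarith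
    have hC : ∀ y ∈ Icc x (x+1), ‖-s * D k (s+1) y‖ ≤
        ‖s‖ * ((∏ i ∈ Finset.range k, ‖(s+1) + i‖) * x ^ (-((s+1).re + k))) := by
      intro y hy
      have hy0 : 0 < y := lt_of_lt_of_le hx hy.1
      rw [norm_mul, norm_neg]
      have h1 := IH (s+1) hre y hy0
      have h2 : y ^ (-((s+1).re + k)) ≤ x ^ (-((s+1).re + k)) := by
        rw [Real.rpow_neg hy0.le, Real.rpow_neg hx.le]
        have := Real.rpow_le_rpow hx.le hy.1 (by positivity : (0:ℝ) ≤ (s+1).re + k)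
        exact inv_anti₀ (Real.rpow_pos_of_pos hx _) this
      have h3 : ‖D k (s+1) y‖ ≤ (∏ i ∈ Finset.range k, ‖(s+1) + i‖) * x ^ (-((s+1).re + k)) := by
        refine h1.trans ?_
        exact mul_le_mul_of_nonneg_left h2 (Finset.prod_nonneg fun _ _ => norm_nonneg _)
      exact mul_le_mul_of_nonneg_left h3 (norm_nonneg _)
    have hder : ∀ y ∈ Icc x (x+1), HasDerivWithinAt (D k s) (-s * D k (s+1) y) (Icc x (x+1)) y :=
      fun y hy => (hasDerivAt_D k s (lt_of_lt_of_le hx hy.1)).hasDerivWithinAt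
    have hmvt := Convex.norm_image_sub_le_of_norm_hasDerivWithin_le hder hC
      (convex_Icc x (x+1)) (left_mem_Icc.mpr (by linarith)) (right_mem_Icc.mpr (by linarith))
    rw [← D_succ] at hmvt
    have : ‖(x + 1) - x‖ = 1 := by norm_num
    rw [this, mul_one] at hmvt
    refine hmvt.trans (le_of_eq ?_)
    rw [Finset.prod_range_succ' (fun i => ‖s + i‖)]
    have hprod : ∀ i : ℕ, ‖s + ((i:ℕ)+1 : ℕ)‖ = ‖(s+1) + i‖ := by
      intro i; congr 1; push_cast; ring
    have : (∏ i ∈ Finset.range k, ‖s + (i+1 : ℕ)‖) = ∏ i ∈ Finset.range k, ‖(s+1) + i‖ :=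
      Finset.prod_congr rfl fun i _ => hprod i
    rw [this]
    have hexp : -((s+1).re + (k:ℝ)) = -(s.re + ((k+1 : ℕ):ℝ)) := by
      simp only [Complex.add_re, Complex.one_re]; push_cast; ring
    rw [hexp]
    simp only [Nat.cast_zero, add_zero]
    ring


section Series

variable (t : ℝ)

lemma summable_D (ht : 0 < t) (K : ℕ) {s : ℂ} (hs : 1 < s.re + K) :
    Summable fun n : ℕ => ‖D K s (t + n)‖ := by
  set P := ∏ i ∈ Finset.range K, ‖s + i‖ with hP
  have hg : Summable fun n : ℕ => P * (1 / |(n : ℝ) + t| ^ (s.re + K)) :=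
    (Summable.mul_left P ((Real.summable_one_div_nat_add_rpow t (s.re + K)).mpr hs))
  refine Summable.of_nonneg_of_le (fun n => norm_nonneg _) (fun n => ?_) hg
  have htn : (0:ℝ) < t + n := by positivity
  have h1 := norm_D_le K s (by linarith) (t + n) htn
  refine h1.trans (le_of_eq ?_)
  rw [abs_of_pos (by linarith : (0:ℝ) < (n:ℝ) + t)]
  rw [Real.rpow_neg htn.le, one_div]
  congr 2
  ring

/-- the alternating sum of `K`-th differences. -/
noncomputable def A (K : ℕ) (s : ℂ) : ℂ := ∑' n : ℕ, (-1 : ℂ) ^ n * D K s (t + n)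

lemma hasSum_A (ht : 0 < t) (K : ℕ) {s : ℂ} (hs : 1 < s.re + K) :
    HasSum (fun n : ℕ => (-1 : ℂ) ^ n * D K s (t + n)) (A t K s) := by
  have hsum : Summable fun n : ℕ => (-1 : ℂ) ^ n * D K s (t + n) := by
    refine Summable.of_norm ?_
    refine (summable_D t ht K hs).congr fun n => ?_
    rw [norm_mul, norm_pow, norm_neg, norm_one, one_pow, one_mul]
  exact hsum.hasSum

/-- partial Euler-transform representation. -/
noncomputable def rep (K : ℕ) (s : ℂ) : ℂ :=
  (∑ k ∈ Finset.range K, (-1 : ℂ) ^ k * D k s t / 2 ^ (k+1)) + (-1 : ℂ) ^ K * A t K s / 2 ^ K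

lemma rep_succ (ht : 0 < t) (K : ℕ) {s : ℂ} (hs : 1 < s.re + K) :
    rep t (K+1) s = rep t K s := by
  set f : ℕ → ℂ := fun n => (-1 : ℂ) ^ n * D K s (t + n) with hf
  have h1 : HasSum f (A t K s) := hasSum_A t ht K hs
  have h2 : HasSum (fun n => f (n + 1)) (A t K s - f 0) := by
    refine (hasSum_nat_add_iff 1).mpr ?_
    simpa using h1
  have h3 : HasSum (fun n : ℕ => (-1 : ℂ) ^ n * D (K+1) s (t + n)) (f 0 - 2 * A t K s) := by
    have h4 := (h2.mul_left (-1)).sub h1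
    have he : (fun n : ℕ => -1 * f (n+1) - f n) = fun n : ℕ => (-1:ℂ)^n * D (K+1) s (t+n) := by
      funext n
      have harg : t + ((n+1:ℕ):ℝ) = (t + n) + 1 := by push_cast; ring
      rw [D_succ K s (t+n)]
      simp only [hf, harg, pow_succ]
      ring
    have hv : -1 * (A t K s - f 0) - A t K s = f 0 - 2 * A t K s := by ring
    rw [he, hv] at h4
    exact h4
  have hA : A t (K+1) s = D K s t - 2 * A t K s := by
    rw [A, h3.tsum_eq]
    simp [hf]
  rw [rep, rep, Finset.sum_range_succ, hA]
  have h2K : (2 : ℂ) ^ K ≠ 0 := pow_ne_zero _ two_ne_zero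
  have h2K1 : (2 : ℂ) ^ (K+1) ≠ 0 := pow_ne_zero _ two_ne_zero
  field_simp
  ring

lemma rep_chain (ht : 0 < t) {K L : ℕ} (hKL : K ≤ L) {s : ℂ} (hs : 1 < s.re + K) :
    rep t L s = rep t K s := by
  induction L, hKL using Nat.le_induction with
  | base => rfl
  | succ L hKL IH =>
    rw [← IH]
    exact rep_succ t ht L (by have : (K:ℝ) ≤ L := Nat.cast_le.mpr hKL; linarith)

/-- index of representation used at `s`. -/
noncomputable def Mdx (s : ℂ) : ℕ := ⌊max 0 (2 - s.re)⌋₊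

lemma Mdx_spec (s : ℂ) : 1 < s.re + Mdx s := by
  have h1 : max 0 (2 - s.re) - 1 < (⌊max 0 (2 - s.re)⌋₊ : ℝ) := Nat.sub_one_lt_floor _
  have h2 : 2 - s.re ≤ max 0 (2 - s.re) := le_max_right _ _
  rw [Mdx]; linarith

/-- the analytic continuation. -/
noncomputable def F (s : ℂ) : ℂ := rep t (Mdx s) s

lemma F_eq (ht : 0 < t) (K : ℕ) {s : ℂ} (hs : 1 < s.re + K) : F t s = rep t K s := by
  rw [F, ← rep_chain t ht (le_max_left K (Mdx s)) hs,
    rep_chain t ht (le_max_right K (Mdx s)) (Mdx_spec s)]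


lemma diff_D_in_s (K : ℕ) {x : ℝ} (hx : 0 < x) : Differentiable ℂ (fun s => D K s x) := by
  have : (fun s => D K s x) = fun s => ∑ i ∈ Finset.range (K+1),
      ((-1 : ℂ)) ^ (K - i) * (K.choose i : ℂ) * b (x + i) s := by
    funext s; exact D_eq_sum K s x
  rw [this]
  refine Differentiable.fun_sum fun i _ => ?_
  exact (b_diff (by positivity : (0:ℝ) < x + i)).const_mul _

lemma summable_part1 (ht : 0 < t) {s : ℂ} (hs : 1 < s.re) :
    Summable fun n : ℕ => ‖((-1 : ℂ)) ^ n / ((t + n : ℝ) : ℂ) ^ s‖ := by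
  refine (summable_D t ht 0 (by simpa using hs)).congr fun n => ?_
  have htn : (0:ℝ) < t + n := by positivity
  simp only [D_zero, b]
  rw [Complex.cpow_neg, norm_div, norm_inv, norm_pow, norm_neg, norm_one, one_pow, one_div]

lemma hasSum_F (ht : 0 < t) {s : ℂ} (hs : 1 < s.re) :
    HasSum (fun n : ℕ => ((-1 : ℂ)) ^ n / ((t + n : ℝ) : ℂ) ^ s) (F t s) := by
  rw [F_eq t ht 0 (by simpa using hs)]
  have h1 := hasSum_A t ht 0 (by simpa using hs)
  have h2 : rep t 0 s = A t 0 s := by simp [rep]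
  rw [h2]
  refine h1.congr_fun fun n => ?_
  simp only [D_zero, b]
  rw [Complex.cpow_neg, div_eq_mul_inv]

lemma diff_F (ht : 0 < t) : Differentiable ℂ (F t) := by
  intro s₀
  set σ : ℝ := s₀.re - 1 with hσ
  set K : ℕ := ⌊max 0 (2 - σ)⌋₊ with hK
  have hσK : 1 < σ + K := by
    have h1 : max 0 (2 - σ) - 1 < (K : ℝ) := Nat.sub_one_lt_floor _
    have h2 : 2 - σ ≤ max 0 (2 - σ) := le_max_right _ _
    linarith
  set V : Set ℂ := {s : ℂ | σ < s.re} ∩ Metric.ball s₀ 1 with hV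
  have hVopen : IsOpen V :=
    ((isOpen_lt continuous_const Complex.continuous_re)).inter Metric.isOpen_ball
  have hs₀V : s₀ ∈ V := by
    constructor
    · simp only [Set.mem_setOf_eq, hσ]; linarith
    · exact Metric.mem_ball_self one_pos
  have hres : ∀ s ∈ V, 1 < s.re + K := fun s hsV => by
    have : σ < s.re := hsV.1
    linarith
  -- the tail is differentiable on V
  have htail : DifferentiableOn ℂ (fun s => A t K s) V := by
    set MM : ℝ := ‖s₀‖ + 1 + K with hMM
    set e₁ : ℝ := σ + K with he₁
    set e₂ : ℝ := s₀.re + 1 + K with he₂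
    have hMM0 : 0 ≤ MM := by positivity
    have hu : Summable fun n : ℕ => MM ^ K * (1 / |(n:ℝ) + t| ^ e₁ + 1 / |(n:ℝ) + t| ^ e₂) := by
      refine Summable.mul_left _ (Summable.add ?_ ?_)
      · exact (Real.summable_one_div_nat_add_rpow t e₁).mpr hσK
      · refine (Real.summable_one_div_nat_add_rpow t e₂).mpr ?_
        have : σ ≤ s₀.re + 1 := by rw [hσ]; linarith
        linarith
    refine Complex.differentiableOn_tsum_of_summable_norm hu
      (fun n => ((diff_D_in_s K (by positivity : (0:ℝ) < t + n)).const_mul _).differentiableOn)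
      hVopen (fun n s hsV => ?_)
    have htn : (0:ℝ) < t + n := by positivity
    have h1 : ‖(-1:ℂ)^n * D K s (t+n)‖ = ‖D K s (t+n)‖ := by
      rw [norm_mul, norm_pow, norm_neg, norm_one, one_pow, one_mul]
    rw [h1]
    have hsre : 1 < s.re + K := hres s hsV
    have h2 := norm_D_le K s (by linarith) (t+n) htn
    refine h2.trans ?_
    have hball : ‖s - s₀‖ < 1 := by
      have := hsV.2; rwa [Metric.mem_ball, dist_eq_norm] at this
    have hsnorm : ‖s‖ < ‖s₀‖ + 1 := by
      calc ‖s‖ = ‖s₀ + (s - s₀)‖ := by ring_nf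
      _ ≤ ‖s₀‖ + ‖s - s₀‖ := norm_add_le _ _
      _ < ‖s₀‖ + 1 := by linarith
    have hprod : (∏ i ∈ Finset.range K, ‖s + i‖) ≤ MM ^ K := by
      have : ∀ i ∈ Finset.range K, ‖s + i‖ ≤ MM := by
        intro i hi
        have hiK : (i:ℝ) ≤ K := by
          have := Finset.mem_range.mp hi; exact_mod_cast this.le
        calc ‖s + i‖ ≤ ‖s‖ + ‖(i:ℂ)‖ := norm_add_le _ _
        _ = ‖s‖ + i := by rw [Complex.norm_natCast]
        _ ≤ MM := by rw [hMM]; linarith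
      calc (∏ i ∈ Finset.range K, ‖s + i‖) ≤ ∏ _i ∈ Finset.range K, MM :=
            Finset.prod_le_prod (fun _ _ => norm_nonneg _) this
      _ = MM ^ K := by rw [Finset.prod_const, Finset.card_range]
    have hrpow : (t+n) ^ (-(s.re + K)) ≤ 1 / |(n:ℝ) + t| ^ e₁ + 1 / |(n:ℝ) + t| ^ e₂ := by
      have habs : |(n:ℝ) + t| = t + n := by rw [abs_of_pos (by linarith)]; ring
      rw [habs, one_div, one_div, ← Real.rpow_neg htn.le, ← Real.rpow_neg htn.le]
      have hee₁ : e₁ ≤ s.re + K := by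
        have : σ < s.re := hsV.1; rw [he₁]; linarith
      have hee₂ : s.re + K ≤ e₂ := by
        have h3 : s.re - s₀.re ≤ |s.re - s₀.re| := le_abs_self _
        have h4 : |(s - s₀).re| ≤ ‖s - s₀‖ := Complex.abs_re_le_norm _
        rw [Complex.sub_re] at h4
        rw [he₂]; linarith
      rcases le_total 1 (t+n) with hb | hb
      · have : (t+n) ^ (-(s.re + K)) ≤ (t+n) ^ (-e₁) :=
          Real.rpow_le_rpow_of_exponent_le hb (by linarith)
        have hpos : (0:ℝ) ≤ (t+n) ^ (-e₂) := Real.rpow_nonneg htn.le _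
        linarith
      · have : (t+n) ^ (-(s.re + K)) ≤ (t+n) ^ (-e₂) :=
          Real.rpow_le_rpow_of_exponent_ge htn hb (by linarith)
        have hpos : (0:ℝ) ≤ (t+n) ^ (-e₁) := Real.rpow_nonneg htn.le _
        linarith
    exact mul_le_mul hprod hrpow (Real.rpow_nonneg htn.le _) (by positivity)
  have hrep : DifferentiableOn ℂ (rep t K) V := by
    refine DifferentiableOn.add ?_ ?_
    · refine (Differentiable.differentiableOn ?_)
      refine Differentiable.fun_sum fun k _ => ?_
      exact ((diff_D_in_s k ht).const_mul _).div_const _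
    · exact ((htail.const_mul _).div_const _)
  have hFV : Set.EqOn (F t) (rep t K) V := fun s hsV => F_eq t ht K (hres s hsV)
  have hmem : V ∈ nhds s₀ := hVopen.mem_nhds hs₀V
  have : DifferentiableAt ℂ (rep t K) s₀ := hrep.differentiableAt hmem
  exact this.congr_of_eventuallyEq (Filter.eventuallyEq_of_mem hmem hFV)

end Series

section Poly

lemma fwdDiff_apply {M G : Type*} [AddCommMonoid M] [AddCommGroup G] (h : M) (f : M → G) (x : M) :
    fwdDiff h f x = f (x + h) - f x := rfl

lemma fwd_comp_ofReal (K : ℕ) (f : ℂ → ℂ) : ∀ (y : ℝ),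
    (fwdDiff (1:ℝ))^[K] (fun x : ℝ => f x) y = (fwdDiff (1:ℂ))^[K] f y := by
  induction K with
  | zero => intro y; simp
  | succ K IH =>
    intro y
    rw [Function.iterate_succ_apply', Function.iterate_succ_apply']
    rw [fwdDiff_apply, fwdDiff_apply, IH (y+1), IH y]
    push_cast
    ring

lemma fwd_pow_vanish : ∀ (m K : ℕ), m < K → ∀ (c : ℂ),
    (fwdDiff (1:ℂ))^[K] (fun z => (z + c) ^ m) = 0 := by
  intro m
  induction m using Nat.strong_induction_on with
  | _ m IH =>
    intro K hK c
    obtain ⟨K', rfl⟩ : ∃ K', K = K' + 1 := ⟨K - 1, by omega⟩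
    rw [Function.iterate_succ_apply]
    have hstep : fwdDiff (1:ℂ) (fun z => (z + c) ^ m)
        = ∑ j ∈ Finset.range m, fun z : ℂ => (m.choose j : ℂ) * (z + c) ^ j := by
      funext z
      rw [fwdDiff_apply]
      have h1 : (z + 1 + c) = (z + c) + 1 := by ring
      rw [h1, add_pow, Finset.sum_range_succ]
      simp only [Finset.sum_apply, one_pow, Nat.choose_self, Nat.cast_one, mul_one, pow_zero]
      rw [add_sub_cancel_right]
      exact Finset.sum_congr rfl fun j _ => by ring
    rw [hstep, fwdDiff_iter_finset_sum]
    refine Finset.sum_eq_zero fun j hj => ?_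
    have hj' : j < m := Finset.mem_range.mp hj
    have hsmul : (fun z : ℂ => (m.choose j : ℂ) * (z + c) ^ j)
        = (m.choose j : ℂ) • fun z : ℂ => (z + c) ^ j := by
      funext z; simp [smul_eq_mul]
    rw [hsmul, fwdDiff_iter_const_smul, IH j hj' K' (by omega) c, smul_zero]

lemma D_neg_nat (K m : ℕ) (x : ℝ) :
    D K (-(m:ℂ)) x = (fwdDiff (1:ℂ))^[K] (fun z : ℂ => z ^ m) x := by
  rw [D]
  have h1 : (fun y : ℝ => b y (-(m:ℂ))) = fun y : ℝ => ((fun z : ℂ => z ^ m) (y:ℂ)) := by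
    funext y
    simp only [b, neg_neg]
    exact Complex.cpow_natCast _ _
  rw [h1]
  exact fwd_comp_ofReal K (fun z : ℂ => z ^ m) x

lemma fwd_pow_vanish' {m K : ℕ} (h : m < K) :
    (fwdDiff (1:ℂ))^[K] (fun z : ℂ => z ^ m) = 0 := by
  have := fwd_pow_vanish m K h 0
  simpa using this

lemma D_neg_nat_vanish {K m : ℕ} (h : m < K) (x : ℝ) : D K (-(m:ℂ)) x = 0 := by
  rw [D_neg_nat, fwd_pow_vanish']
  · rfl
  · exact h

/-- building block of the Euler polynomials. -/
noncomputable def Q (m k : ℕ) : Polynomial ℂ :=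
  ∑ i ∈ Finset.range (k+1), Polynomial.C ((-1 : ℂ) ^ i * (k.choose i : ℂ)) * (Polynomial.X + Polynomial.C (i:ℂ)) ^ m

/-- the Euler polynomials. -/
noncomputable def Epoly (m : ℕ) : Polynomial ℂ :=
  ∑ k ∈ Finset.range (m+1), Polynomial.C (((2:ℂ) ^ k)⁻¹) * Q m k

lemma eval_Q_sum (m k : ℕ) (z : ℂ) :
    (Q m k).eval z
      = ∑ i ∈ Finset.range (k+1), (-1 : ℂ) ^ i * (k.choose i : ℂ) * (z + i) ^ m := by
  rw [Q, Polynomial.eval_finset_sum]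
  exact Finset.sum_congr rfl fun i _ => by
    rw [eval_mul, eval_C, eval_pow, eval_add, eval_X, eval_C]

lemma eval_Q (m k : ℕ) (z : ℂ) :
    (Q m k).eval z = (-1 : ℂ) ^ k * (fwdDiff (1:ℂ))^[k] (fun w : ℂ => w ^ m) z := by
  rw [fwdDiff_iter_eq_sum_shift, eval_Q_sum, Finset.mul_sum]
  refine Finset.sum_congr rfl fun i hi => ?_
  have hik : i ≤ k := by have := Finset.mem_range.mp hi; omega
  have hsign : (-1:ℂ)^k * (-1:ℂ)^(k-i) = (-1:ℂ)^i := by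
    rw [← pow_add]
    have h2 : k + (k - i) = 2*(k-i) + i := by omega
    rw [h2, pow_add, pow_mul, neg_one_sq, one_pow, one_mul]
  rw [zsmul_eq_mul, nsmul_eq_mul, mul_one]
  push_cast
  rw [← hsign]
  ring

lemma Q_vanish {m k : ℕ} (h : m < k) : Q m k = 0 := by
  apply Polynomial.funext
  intro z
  rw [eval_Q, fwd_pow_vanish' h]
  simp

lemma Q_zero (n : ℕ) : Q n 0 = Polynomial.X ^ n := by
  simp [Q]

lemma Q_comp (n k : ℕ) : (Q n k).comp (Polynomial.X + 1) = Q n k - Q n (k+1) := by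
  apply Polynomial.funext
  intro z
  rw [eval_comp, eval_add, eval_X, eval_one, eval_sub, eval_Q, eval_Q, eval_Q,
    Function.iterate_succ_apply', fwdDiff_apply, pow_succ]
  ring

lemma sum_choose_Q (n k : ℕ) :
    ∑ j ∈ Finset.range (n+1), Polynomial.C ((n.choose j : ℂ)) * Q j k = (Q n k).comp (Polynomial.X + 1) := by
  apply Polynomial.funext
  intro z
  rw [eval_comp, eval_add, eval_X, eval_one, eval_Q_sum, Polynomial.eval_finset_sum]
  have hL : ∀ j ∈ Finset.range (n+1), (Polynomial.C ((n.choose j : ℂ)) * Q j k).eval z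
      = ∑ i ∈ Finset.range (k+1), (n.choose j : ℂ) * ((-1:ℂ)^i * (k.choose i : ℂ) * (z + i) ^ j) := by
    intro j _
    rw [eval_mul, eval_C, eval_Q_sum, Finset.mul_sum]
  rw [Finset.sum_congr rfl hL, Finset.sum_comm]
  refine Finset.sum_congr rfl fun i _ => ?_
  have hb : (z + 1 + (i:ℂ)) = (z + i) + 1 := by ring
  rw [hb, add_pow, Finset.mul_sum]
  exact Finset.sum_congr rfl fun j _ => by simp only [one_pow, mul_one]; ring

lemma Gn (n : ℕ) :
    Epoly n + ∑ j ∈ Finset.range (n+1), Polynomial.C ((n.choose j : ℂ)) * Epoly j = 2 * Polynomial.X ^ n := by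
  have hEj : ∀ j ∈ Finset.range (n+1), Polynomial.C ((n.choose j:ℂ)) * Epoly j
      = ∑ k ∈ Finset.range (n+1), Polynomial.C (((2:ℂ)^k)⁻¹) * (Polynomial.C ((n.choose j:ℂ)) * Q j k) := by
    intro j hj
    have hjn : j + 1 ≤ n + 1 := by have := Finset.mem_range.mp hj; omega
    rw [Epoly, Finset.mul_sum]
    rw [← Finset.sum_subset (Finset.range_subset_range.mpr hjn)]
    · exact Finset.sum_congr rfl fun k _ => by ring
    · intro k hk hk'
      have hkj : j < k := by
        have h1 := Finset.mem_range.mp hk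
        have h2 : ¬ (k < j + 1) := fun h => hk' (Finset.mem_range.mpr h)
        omega
      rw [Q_vanish hkj, mul_zero, mul_zero]
  have hS : ∑ j ∈ Finset.range (n+1), Polynomial.C ((n.choose j : ℂ)) * Epoly j
      = 2 * Q n 0 - Epoly n := by
    rw [Finset.sum_congr rfl hEj, Finset.sum_comm]
    have hinner : ∀ k ∈ Finset.range (n+1),
        ∑ j ∈ Finset.range (n+1), Polynomial.C (((2:ℂ)^k)⁻¹) * (Polynomial.C ((n.choose j:ℂ)) * Q j k)
        = Polynomial.C (((2:ℂ)^k)⁻¹) * Q n k - Polynomial.C (((2:ℂ)^k)⁻¹) * Q n (k+1) := by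
      intro k _
      rw [← Finset.mul_sum, sum_choose_Q, Q_comp, mul_sub]
    rw [Finset.sum_congr rfl hinner, Finset.sum_sub_distrib]
    have hre : ∑ k ∈ Finset.range (n+1), Polynomial.C (((2:ℂ)^k)⁻¹) * Q n (k+1)
        = 2 * (Epoly n - Q n 0) := by
      have h1 : ∀ k ∈ Finset.range (n+1), Polynomial.C (((2:ℂ)^k)⁻¹) * Q n (k+1)
          = 2 * (Polynomial.C (((2:ℂ)^(k+1))⁻¹) * Q n (k+1)) := by
        intro k _
        have hc : ((2:ℂ)^k)⁻¹ = 2 * ((2:ℂ)^(k+1))⁻¹ := by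
          rw [pow_succ, mul_inv]
          field_simp
        rw [hc, map_mul, map_ofNat]
        ring
      rw [Finset.sum_congr rfl h1, ← Finset.mul_sum]
      congr 1
      have h2 := Finset.sum_range_succ' (fun k => Polynomial.C (((2:ℂ)^k)⁻¹) * Q n k) (n+1)
      have h3 : ∑ k ∈ Finset.range (n+2), Polynomial.C (((2:ℂ)^k)⁻¹) * Q n k = Epoly n := by
        rw [Finset.sum_range_succ, Q_vanish (lt_add_one n), mul_zero, add_zero, Epoly]
      rw [h3] at h2
      have h4 : Polynomial.C (((2:ℂ)^(0:ℕ))⁻¹) * Q n 0 = Q n 0 := by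
        norm_num
      rw [h4] at h2
      linear_combination -h2
    rw [hre, Epoly]
    ring
  rw [hS, Q_zero]
  ring

end Poly

section Values
variable (t : ℝ)

lemma F_neg_nat (ht : 0 < t) (m : ℕ) : F t (-(m:ℂ)) = (Epoly m).eval (t:ℂ) / 2 := by
  have hre : 1 < (-(m:ℂ)).re + ((m+2 : ℕ):ℝ) := by
    simp only [Complex.neg_re, Complex.natCast_re]
    push_cast; linarith
  rw [F_eq t ht (m+2) hre, rep]
  have hA0 : A t (m+2) (-(m:ℂ)) = 0 := by
    rw [A]
    have h0 : ∀ n : ℕ, (-1:ℂ)^n * D (m+2) (-(m:ℂ)) (t+n) = 0 := fun n => by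
      rw [D_neg_nat_vanish (by omega), mul_zero]
    rw [tsum_congr h0, tsum_zero]
  rw [hA0, mul_zero, zero_div, add_zero]
  have hterm : ∀ k, (-1:ℂ)^k * D k (-(m:ℂ)) t = (Q m k).eval (t:ℂ) := by
    intro k
    rw [eval_Q, D_neg_nat]
  have hsum : ∑ k ∈ Finset.range (m+2), (-1:ℂ)^k * D k (-(m:ℂ)) t / 2^(k+1)
      = ∑ k ∈ Finset.range (m+2), (Q m k).eval (t:ℂ) / 2^(k+1) :=
    Finset.sum_congr rfl fun k _ => by rw [hterm]
  rw [hsum, Finset.sum_range_succ, Q_vanish (lt_add_one m)]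
  simp only [eval_zero, zero_div, add_zero]
  rw [Epoly, Polynomial.eval_finset_sum, Finset.sum_div]
  refine Finset.sum_congr rfl fun k _ => ?_
  rw [eval_mul, eval_C, pow_succ]
  have h2k : ((2:ℂ))^k ≠ 0 := pow_ne_zero _ two_ne_zero
  field_simp

end Values

lemma PSid : (PowerSeries.exp (Polynomial ℂ) + 1) *
      PowerSeries.mk (fun m => Polynomial.C ((m.factorial : ℂ))⁻¹ * Epoly m)
    = 2 * PowerSeries.mk (fun m => Polynomial.C ((m.factorial : ℂ))⁻¹ * Polynomial.X ^ m) := by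
  ext n : 1
  rw [two_mul, map_add, add_mul, one_mul, map_add, PowerSeries.coeff_mul]
  simp only [PowerSeries.coeff_mk, PowerSeries.coeff_exp]
  rw [Finset.Nat.sum_antidiagonal_eq_sum_range_succ
    (fun i j => (algebraMap ℚ (Polynomial ℂ) (1 / (i.factorial : ℚ)))
      * (Polynomial.C ((j.factorial:ℂ))⁻¹ * Epoly j)) n]
  have hterm : ∀ i ∈ Finset.range (n+1),
      (algebraMap ℚ (Polynomial ℂ) (1 / (i.factorial : ℚ)))
        * (Polynomial.C (((n-i).factorial:ℂ))⁻¹ * Epoly (n-i))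
      = Polynomial.C ((n.factorial:ℂ))⁻¹ * (Polynomial.C ((n.choose (n-i) : ℂ)) * Epoly (n-i)) := by
    intro i hi
    have hin : i ≤ n := by have := Finset.mem_range.mp hi; omega
    have halg : (algebraMap ℚ (Polynomial ℂ)) (1 / (i.factorial : ℚ))
        = Polynomial.C ((i.factorial:ℂ))⁻¹ := by
      rw [Polynomial.algebraMap_apply]
      congr 1
      rw [show (algebraMap ℚ ℂ) (1 / (i.factorial : ℚ)) = ((1 / (i.factorial : ℚ) : ℚ) : ℂ) from rfl]
      push_cast
      ring
    have hfac : ((i.factorial:ℂ))⁻¹ * (((n-i).factorial:ℂ))⁻¹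
        = ((n.factorial:ℂ))⁻¹ * ((n.choose (n-i)):ℂ) := by
      have h1 : n.choose (n-i) * (n-i).factorial * (n-(n-i)).factorial = n.factorial :=
        Nat.choose_mul_factorial_mul_factorial (Nat.sub_le n i)
      have h2 : n - (n - i) = i := by omega
      rw [h2] at h1
      have h3 : ((n.choose (n-i) : ℂ)) * (((n-i).factorial:ℂ)) * ((i.factorial:ℂ))
          = ((n.factorial:ℂ)) := by exact_mod_cast congrArg (Nat.cast : ℕ → ℂ) h1
      have hif : ((i.factorial:ℂ)) ≠ 0 := Nat.cast_ne_zero.mpr (Nat.factorial_ne_zero _)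
      have hnif : (((n-i).factorial:ℂ)) ≠ 0 := Nat.cast_ne_zero.mpr (Nat.factorial_ne_zero _)
      have hnf : ((n.factorial:ℂ)) ≠ 0 := Nat.cast_ne_zero.mpr (Nat.factorial_ne_zero _)
      have h4 : ((n.choose i:ℂ)) * ((i.factorial:ℂ)) * (((n-i).factorial:ℂ))
          = ((n.factorial:ℂ)) := by
        exact_mod_cast congrArg (Nat.cast : ℕ → ℂ)
          (Nat.choose_mul_factorial_mul_factorial hin)
      field_simp
      rw [Nat.choose_symm hin]; linear_combination -h4
    rw [halg, ← mul_assoc, ← map_mul, hfac, map_mul, mul_assoc]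
  rw [Finset.sum_congr rfl hterm, ← Finset.mul_sum]
  have hrefl := Finset.sum_range_reflect (fun j => Polynomial.C ((n.choose j : ℂ)) * Epoly j) (n+1)
  simp only [Nat.add_sub_cancel] at hrefl
  rw [hrefl]
  linear_combination (Polynomial.C ((n.factorial:ℂ))⁻¹) * Gn n

end AltHZ



theorem alternating_hurwitz_entire_and_special_values (t : ℝ) (ht : 0 < t) :
    (∀ s : ℂ, 1 < s.re →
      Summable fun n : ℕ => ‖((-1 : ℂ)) ^ n / ((t + n : ℝ) : ℂ) ^ s‖) ∧
    ∃ (F : ℂ → ℂ) (E : ℕ → Polynomial ℂ),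
      Differentiable ℂ F ∧
      (∀ s : ℂ, 1 < s.re →
        HasSum (fun n : ℕ => ((-1 : ℂ)) ^ n / ((t + n : ℝ) : ℂ) ^ s) (F s)) ∧
      ((PowerSeries.exp (Polynomial ℂ) + 1) *
          PowerSeries.mk (fun m => Polynomial.C ((m.factorial : ℂ))⁻¹ * E m) =
        2 * PowerSeries.mk (fun m => Polynomial.C ((m.factorial : ℂ))⁻¹ * Polynomial.X ^ m)) ∧
      ∀ m : ℕ, F (-(m : ℂ)) = (E m).eval (t : ℂ) / 2 := by
  constructor
  · intro s hs
    exact AltHZ.summable_part1 t ht hs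
  · exact ⟨AltHZ.F t, AltHZ.Epoly, AltHZ.diff_F t ht,
      fun s hs => AltHZ.hasSum_F t ht hs, AltHZ.PSid,
      fun m => AltHZ.F_neg_nat t ht m⟩
end
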